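/- arXiv:2505.06824 — 3 statements merged into one kernel-verified Lean document; each statement's English description precedes it below -/
import Mathlib

section
/- (Validity of the recursiveness axiom A5.) For every causal deontic model M_D and all pairwise distinct endogenous variables X_0,…,X_k, it is not the case that M_D ⊨ X_0⇝X_1, …, M_D ⊨ X_{k-1}⇝X_k, and M_D ⊨ X_k⇝X_0 all hold, where Y⇝Z abbreviates the disjunction, over all tuples X⃗ of distinct endogenous variables excluding Y and Z with values x⃗ and all values y≠y' of Y and z≠z' of Z, of ([X⃗=x⃗,Y=y]Z=z' ∧ [X⃗=x⃗,Y=y']Z=z). -/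
/-- A signature `(U, V, R)`: finite set of exogenous variables `U`, finite set of
endogenous variables `V` (disjoint from `U`, modelled by a sum type), and for each
variable a finite nonempty range of values. -/
structure Signature where
  U : Type
  V : Type
  R : U ⊕ V → Type
  fintypeU : Fintype U
  fintypeV : Fintype V
  decEqU : DecidableEq U
  decEqV : DecidableEq V
  fintypeR : ∀ X, Fintype (R X)
  nonemptyR : ∀ X, Nonempty (R X)
  decEqR : ∀ X, DecidableEq (R X)

attribute [instance] Signature.fintypeU Signature.fintypeV Signature.decEqU
  Signature.decEqV Signature.fintypeR Signature.nonemptyR Signature.decEqR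

/-- An assignment of values to all the variables. -/
abbrev Assignment (S : Signature) : Type := ∀ X : S.U ⊕ S.V, S.R X

/-- An exogenous setting: an assignment of values to all exogenous variables. -/
abbrev ExoSetting (S : Signature) : Type := ∀ X : S.U, S.R (Sum.inl X)

/-- An assignment of values to all variables except `X` (i.e. `A^{-X}`). -/
abbrev CoAssignment (S : Signature) (X : S.U ⊕ S.V) : Type :=
  ∀ Y : S.U ⊕ S.V, Y ≠ X → S.R Y

/-- The restriction `A^{-X}` of an assignment. -/
def Assignment.minus {S : Signature} (A : Assignment S) (X : S.U ⊕ S.V) :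
    CoAssignment S X := fun Y _ => A Y

/-- A set of structural functions: for each endogenous variable `X`, a function
giving the value of `X` from the values of all the other variables. -/
abbrev StructFns (S : Signature) : Type :=
  ∀ X : S.V, CoAssignment S (Sum.inr X) → S.R (Sum.inr X)

/-- `A` complies with `F` iff `A(X) = f_X(A^{-X})` for every endogenous `X`. -/
def Complies (S : Signature) (F : StructFns S) (A : Assignment S) : Prop :=
  ∀ X : S.V, A (Sum.inr X) = F X (A.minus (Sum.inr X))

/-- `F` is recursive (acyclic): there is a strict total order on the variables such
that each `f_X` does not depend on the values of variables strictly above `X`. -/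
def Recursive (S : Signature) (F : StructFns S) : Prop :=
  ∃ lt : (S.U ⊕ S.V) → (S.U ⊕ S.V) → Prop,
    IsStrictTotalOrder (S.U ⊕ S.V) lt ∧
    ∀ X : S.V, ∀ B B' : CoAssignment S (Sum.inr X),
      (∀ Y (hne : Y ≠ Sum.inr X), lt Y (Sum.inr X) → B Y hne = B' Y hne) →
      F X B = F X B'

/-- An intervention tuple `X⃗ = x⃗`: a list of endogenous variables with values. -/
abbrev Ivn (S : Signature) : Type := List ((X : S.V) × S.R (Sum.inr X))

/-- The variables of an intervention tuple. -/
def Ivn.fsts {S : Signature} (l : Ivn S) : List S.V := l.map Sigma.fst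

/-- The variables in the tuple are pairwise distinct. -/
def Ivn.Distinct {S : Signature} (l : Ivn S) : Prop := (l.map Sigma.fst).Nodup

/-- The intervened structural functions `F_{X⃗ = x⃗}`: each `f_{X_i}` is replaced by
the constant function returning `x_i`; the other functions are unchanged. -/
noncomputable def applyIvn (S : Signature) (F : StructFns S) (l : Ivn S) : StructFns S :=
  fun X B =>
    if h : ∃ x : S.R (Sum.inr X), (⟨X, x⟩ : (Y : S.V) × S.R (Sum.inr Y)) ∈ l then h.choose
    else F X B

/-- Formulas of the language `L_D`:
atoms `X = x`, negation, conjunction, intervention formulas `[X⃗=x⃗]φ`,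
priority formulas `X=x ≺ Y=y`, and context formulas `φ^u`. -/
inductive Formula (S : Signature) : Type where
  | atom (X : S.U ⊕ S.V) (x : S.R X) : Formula S
  | neg (φ : Formula S) : Formula S
  | and (φ ψ : Formula S) : Formula S
  | intervene (l : Ivn S) (φ : Formula S) : Formula S
  | prec (X : S.U ⊕ S.V) (x : S.R X) (Y : S.U ⊕ S.V) (y : S.R Y) : Formula S
  | ctx (u : ExoSetting S) (φ : Formula S) : Formula S

def Formula.imp {S : Signature} (φ ψ : Formula S) : Formula S := .neg (.and φ (.neg ψ))

def Formula.or {S : Signature} (φ ψ : Formula S) : Formula S := .neg (.and (.neg φ) (.neg ψ))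

def Formula.iffF {S : Signature} (φ ψ : Formula S) : Formula S := .and (φ.imp ψ) (ψ.imp φ)

/-- Atoms `X = x`. -/
abbrev SAtom (S : Signature) : Type := (X : S.U ⊕ S.V) × S.R X

/-- A priority structure `P = (Φ, ≪)`: a set of atoms together with a
priority relation among atoms. -/
structure Priority (S : Signature) where
  dom : Set (SAtom S)
  lt : SAtom S → SAtom S → Prop

/-- The priority relation is a strict partial order (asymmetric and transitive). -/
def Priority.Strict {S : Signature} (P : Priority S) : Prop :=
  (∀ a b, P.lt a b → ¬ P.lt b a) ∧ (∀ a b c, P.lt a b → P.lt b c → P.lt a c)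

open Classical in
/-- The unique assignment complying with `F` whose values on the exogenous
variables are given by `u` (when `F` is recursive it exists and is unique). -/
noncomputable def solve (S : Signature) (F : StructFns S) (u : ExoSetting S) : Assignment S :=
  if h : ∃ A : Assignment S, Complies S F A ∧ ∀ X : S.U, A (Sum.inl X) = u X then h.choose
  else fun X => Classical.arbitrary (S.R X)

/-- Truth of a formula at structural functions `F`, priority `P` and actual
assignment `A`. -/
def Sat (S : Signature) : StructFns S → Priority S → Assignment S → Formula S → Prop
  | _, _, A, .atom X x => A X = x
  | F, P, A, .neg φ => ¬ Sat S F P A φ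
  | F, P, A, .and φ ψ => Sat S F P A φ ∧ Sat S F P A ψ
  | F, P, A, .intervene l φ =>
      Sat S (applyIvn S F l) P (solve S (applyIvn S F l) (fun X => A (Sum.inl X))) φ
  | _, P, _, .prec X x Y y => P.lt ⟨X, x⟩ ⟨Y, y⟩
  | F, P, _, .ctx u φ => Sat S F P (solve S F u) φ

/-- A causal deontic model: recursive structural functions, a priority
structure which is a strict partial order, and an actual assignment complying
with the structural functions. -/
structure CDModel (S : Signature) where
  F : StructFns S
  P : Priority S
  A : Assignment S
  recF : Recursive S F
  strictP : P.Strict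
  compliesA : Complies S F A

/-- Truth in a causal deontic model. -/
def CDModel.Sat {S : Signature} (M : CDModel S) (φ : Formula S) : Prop :=
  _root_.Sat S M.F M.P M.A φ

/-- `Y ⇝ Z`: `Y` has causal influence on `Z` in the model `M`.  This is the
semantic content of the abbreviation
`⋁ ([X⃗=x⃗,Y=y]Z=z' ∧ [X⃗=x⃗,Y=y']Z=z)`, the disjunction being over all tuples
`X⃗ = x⃗` of distinct endogenous variables excluding `Y` and `Z`, and all values
`y ≠ y'` of `Y` and `z ≠ z'` of `Z`. -/
def Influences {S : Signature} (M : CDModel S) (Y Z : S.V) : Prop :=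
  Y ≠ Z ∧
  ∃ (l : Ivn S) (y y' : S.R (Sum.inr Y)) (z z' : S.R (Sum.inr Z)),
    Ivn.Distinct (l ++ [⟨Y, y⟩]) ∧ Z ∉ Ivn.fsts l ∧ y ≠ y' ∧ z ≠ z' ∧
    M.Sat (.intervene (l ++ [⟨Y, y⟩]) (.atom (Sum.inr Z) z')) ∧
    M.Sat (.intervene (l ++ [⟨Y, y'⟩]) (.atom (Sum.inr Z) z))

section Aux

variable {S : Signature}

/-- Dependency condition for a set of structural functions w.r.t. an order. -/
def Dep (S : Signature) (F : StructFns S)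
    (lt : (S.U ⊕ S.V) → (S.U ⊕ S.V) → Prop) : Prop :=
  ∀ X : S.V, ∀ B B' : CoAssignment S (Sum.inr X),
    (∀ Y (hne : Y ≠ Sum.inr X), lt Y (Sum.inr X) → B Y hne = B' Y hne) →
    F X B = F X B'

/- Explicit complying assignment for a recursive `F`, by well-founded recursion. -/
open Classical in
noncomputable def buildA (S : Signature) (F : StructFns S) (u : ExoSetting S)
    (lt : (S.U ⊕ S.V) → (S.U ⊕ S.V) → Prop) (wf : WellFounded lt) : Assignment S :=
  WellFounded.fix wf (C := fun W => S.R W) (fun W rec =>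
    match W, rec with
    | Sum.inl x, _ => u x
    | Sum.inr Xv, rec =>
      F Xv (fun V _ => if h : lt V (Sum.inr Xv) then rec V h else Classical.arbitrary _))

lemma buildA_inl (F : StructFns S) (u : ExoSetting S) (lt) (wf : WellFounded lt)
    (x : S.U) : buildA S F u lt wf (Sum.inl x) = u x := by
  rw [buildA, WellFounded.fix_eq]

open Classical in
lemma buildA_inr (F : StructFns S) (u : ExoSetting S) (lt) (wf : WellFounded lt)
    (Xv : S.V) : buildA S F u lt wf (Sum.inr Xv) =
      F Xv (fun V _ => if _ : lt V (Sum.inr Xv) then buildA S F u lt wf V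
        else Classical.arbitrary _) := by
  rw [buildA, WellFounded.fix_eq]

lemma buildA_complies (F : StructFns S) (u : ExoSetting S) (lt)
    (wf : WellFounded lt) (hdep : Dep S F lt) :
    Complies S F (buildA S F u lt wf) := by
  intro Xv
  rw [buildA_inr]
  refine hdep Xv _ _ (fun V hne hlt => ?_)
  simp only [Assignment.minus, dif_pos hlt]

lemma solve_spec (F : StructFns S) (u : ExoSetting S) (lt) (wf : WellFounded lt)
    (hdep : Dep S F lt) :
    Complies S F (solve S F u) ∧ ∀ x : S.U, solve S F u (Sum.inl x) = u x := by
  have hex : ∃ A : Assignment S, Complies S F A ∧ ∀ x : S.U, A (Sum.inl x) = u x :=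
    ⟨buildA S F u lt wf, buildA_complies F u lt wf hdep,
      fun x => buildA_inl F u lt wf x⟩
  rw [solve, dif_pos hex]
  exact hex.choose_spec

lemma choose_eq_of_prop_iff {α : Sort*} {p q : α → Prop} (h : ∀ x, p x ↔ q x)
    (h1 : ∃ x, p x) (h2 : ∃ x, q x) : h1.choose = h2.choose := by
  have hpq : p = q := funext fun x => propext (h x)
  subst hpq
  rfl

/-- Intervened structural functions agree at `X` when the interventions agree
about `X`. -/
lemma applyIvn_congr (F : StructFns S) (l1 l2 : Ivn S) (Xv : S.V)
    (h : ∀ x : S.R (Sum.inr Xv),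
      ((⟨Xv, x⟩ : (Y : S.V) × S.R (Sum.inr Y)) ∈ l1 ↔ (⟨Xv, x⟩ : (Y : S.V) × S.R (Sum.inr Y)) ∈ l2)) :
    applyIvn S F l1 Xv = applyIvn S F l2 Xv := by
  funext B
  unfold applyIvn
  by_cases h1 : ∃ x : S.R (Sum.inr Xv), (⟨Xv, x⟩ : (Y : S.V) × S.R (Sum.inr Y)) ∈ l1
  · have h2 : ∃ x : S.R (Sum.inr Xv), (⟨Xv, x⟩ : (Y : S.V) × S.R (Sum.inr Y)) ∈ l2 :=
      ⟨h1.choose, (h _).mp h1.choose_spec⟩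
    rw [dif_pos h1, dif_pos h2]
    exact choose_eq_of_prop_iff h h1 h2
  · have h2 : ¬ ∃ x : S.R (Sum.inr Xv), (⟨Xv, x⟩ : (Y : S.V) × S.R (Sum.inr Y)) ∈ l2 :=
      fun ⟨x, hx⟩ => h1 ⟨x, (h x).mpr hx⟩
    rw [dif_neg h1, dif_neg h2]

lemma applyIvn_dep (F : StructFns S) (l : Ivn S) (lt) (hdep : Dep S F lt) :
    Dep S (applyIvn S F l) lt := by
  intro Xv B B' hBB
  unfold applyIvn
  by_cases h : ∃ x : S.R (Sum.inr Xv), (⟨Xv, x⟩ : (Y : S.V) × S.R (Sum.inr Y)) ∈ l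
  · rw [dif_pos h, dif_pos h]
  · rw [dif_neg h, dif_neg h]
    exact hdep Xv B B' hBB

/-- Two complying assignments for structural functions that agree except possibly
at `Y` agree on all variables strictly below `Y`. -/
lemma agree_below (lt) (hsto : IsStrictTotalOrder (S.U ⊕ S.V) lt)
    (wf : WellFounded lt) (F1 F2 : StructFns S)
    (hdep2 : Dep S F2 lt) (A1 A2 : Assignment S)
    (h1 : Complies S F1 A1) (h2 : Complies S F2 A2)
    (hexo : ∀ x : S.U, A1 (Sum.inl x) = A2 (Sum.inl x))
    (Y : S.V) (hF : ∀ W : S.V, W ≠ Y → F1 W = F2 W) :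
    ∀ W, lt W (Sum.inr Y) → A1 W = A2 W := by
  intro W
  induction W using WellFounded.induction wf with
  | _ W ih =>
    intro hWY
    cases W with
    | inl x => exact hexo x
    | inr Xv =>
      have hXY : Xv ≠ Y := by
        rintro rfl
        exact hsto.irrefl _ hWY
      rw [h1 Xv, h2 Xv, hF Xv hXY]
      exact hdep2 Xv _ _ (fun V hne hV => ih V hV (hsto.trans _ _ _ hV hWY))

/-- Key lemma: influence implies strictly below in the recursive order. -/
lemma influences_lt (M : CDModel S) (lt) (hsto : IsStrictTotalOrder (S.U ⊕ S.V) lt)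
    (wf : WellFounded lt) (hdep : Dep S M.F lt) (Y Z : S.V)
    (h : Influences M Y Z) : lt (Sum.inr Y) (Sum.inr Z) := by
  obtain ⟨hne, l, y, y', z, z', _, _, hyy, hzz, hs1, hs2⟩ := h
  set u : ExoSetting S := fun x => M.A (Sum.inl x) with hu
  set F1 := applyIvn S M.F (l ++ [⟨Y, y⟩]) with hF1
  set F2 := applyIvn S M.F (l ++ [⟨Y, y'⟩]) with hF2
  have hdep1 : Dep S F1 lt := applyIvn_dep _ _ _ hdep
  have hdep2 : Dep S F2 lt := applyIvn_dep _ _ _ hdep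
  have hs1' : solve S F1 u (Sum.inr Z) = z' := hs1
  have hs2' : solve S F2 u (Sum.inr Z) = z := hs2
  have hsp1 := solve_spec F1 u lt wf hdep1
  have hsp2 := solve_spec F2 u lt wf hdep2
  have hF : ∀ W : S.V, W ≠ Y → F1 W = F2 W := by
    intro W hWY
    refine applyIvn_congr _ _ _ _ (fun x => ?_)
    have key : ∀ v : S.R (Sum.inr Y),
        ((⟨W, x⟩ : (T : S.V) × S.R (Sum.inr T)) ∈ l ++ [⟨Y, v⟩] ↔
          (⟨W, x⟩ : (T : S.V) × S.R (Sum.inr T)) ∈ l) := by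
      intro v
      simp only [List.mem_append, List.mem_singleton]
      constructor
      · rintro (h | h)
        · exact h
        · exact absurd (congrArg Sigma.fst h) hWY
      · exact fun h => Or.inl h
    exact (key y).trans (key y').symm
  by_contra hnlt
  have hZY : lt (Sum.inr Z) (Sum.inr Y) := by
    by_contra h'
    exact hne (Sum.inr_injective (hsto.trichotomous (Sum.inr Y) (Sum.inr Z) hnlt h'))
  have := agree_below lt hsto wf F1 F2 hdep2 (solve S F1 u) (solve S F2 u)
    hsp1.1 hsp2.1 (fun x => by rw [hsp1.2 x, hsp2.2 x]) Y hF (Sum.inr Z) hZY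
  rw [hs1', hs2'] at this
  exact hzz this.symm

end Aux

/-- validity of the recursiveness axiom A5: for every causal deontic
model `M_D` and all pairwise distinct endogenous variables `X_0, …, X_k`, it is not
the case that `X_0 ⇝ X_1`, …, `X_{k-1} ⇝ X_k` and `X_k ⇝ X_0` all hold in `M_D`. -/
theorem A5_valid (S : Signature) (M : CDModel S) (k : ℕ)
    (X : Fin (k + 1) → S.V) (hinj : Function.Injective X) :
    ¬ ((∀ i : Fin k, Influences M (X i.castSucc) (X i.succ)) ∧
        Influences M (X (Fin.last k)) (X 0)) := by
  rintro ⟨hs, hl⟩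
  obtain ⟨lt, hsto, hdep⟩ := M.recF
  haveI := hsto
  have wf : WellFounded lt := Finite.wellFounded_of_trans_of_irrefl lt
  have hchain : ∀ i : Fin k, lt (Sum.inr (X i.castSucc)) (Sum.inr (X i.succ)) :=
    fun i => influences_lt M lt hsto wf hdep _ _ (hs i)
  have hlast : lt (Sum.inr (X (Fin.last k))) (Sum.inr (X 0)) :=
    influences_lt M lt hsto wf hdep _ _ hl
  have h0 : ∀ i : Fin (k + 1), i = 0 ∨ lt (Sum.inr (X 0)) (Sum.inr (X i)) := by
    intro i
    induction i using Fin.induction with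
    | zero => exact Or.inl rfl
    | succ i ih =>
      right
      rcases ih with h | h
      · rw [← h]; exact hchain i
      · exact hsto.trans _ _ _ h (hchain i)
  rcases h0 (Fin.last k) with h | h
  · rw [h] at hlast
    exact hsto.irrefl _ hlast
  · exact hsto.irrefl _ (hsto.trans _ _ _ h hlast)
end

section
/- (Validity of the axiom Incl.) For every causal deontic model M_D=(S,F,P,A), every exogenous setting u, and every formula φ: if the actual assignment A agrees with u on the exogenous variables and M_D ⊨ φ, then M_D ⊨ φ^u. -/
lemma complies_unique (S : Signature) (F : StructFns S) (hrec : Recursive S F)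
    (A A' : Assignment S) (hA : Complies S F A) (hA' : Complies S F A')
    (hex : ∀ X : S.U, A (Sum.inl X) = A' (Sum.inl X)) : A = A' := by
  obtain ⟨lt, hsto, hdep⟩ := hrec
  haveI := hsto.toTrichotomous
  haveI := hsto.toIrrefl
  haveI := hsto.toIsTrans
  have hwf : WellFounded lt := Finite.wellFounded_of_trans_of_irrefl lt
  funext Y
  induction Y using hwf.induction with
  | _ Y ih =>
    cases Y with
    | inl X => exact hex X
    | inr X =>
      rw [hA X, hA' X]
      exact hdep X _ _ (fun Z hne hlt => ih Z hlt)

/-- validity of the axiom Incl: for every causal deontic model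
`M_D = (S, F, P, A)`, every exogenous setting `u`, and every formula `φ`: if the
actual assignment `A` agrees with `u` on the exogenous variables and `M_D ⊨ φ`,
then `M_D ⊨ φ^u`. -/
theorem incl_valid (S : Signature) (M : CDModel S) (u : ExoSetting S) (φ : Formula S)
    (hu : ∀ X : S.U, M.A (Sum.inl X) = u X) (hφ : M.Sat φ) :
    M.Sat (.ctx u φ) := by
  have hsolve : solve S M.F u = M.A := by
    rw [solve, dif_pos ⟨M.A, M.compliesA, hu⟩]
    have h := (⟨M.A, M.compliesA, hu⟩ : ∃ A : Assignment S, Complies S M.F A ∧ ∀ X : S.U, A (Sum.inl X) = u X).choose_spec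
    exact complies_unique S M.F M.recF _ M.A h.1 M.compliesA
      (fun X => (h.2 X).trans (hu X).symm)
  show Sat S M.F M.P (solve S M.F u) φ
  rw [hsolve]; exact hφ
end

section
/- (Definability of the ideal ordering between intervened states, formula (2).) Fix a signature S and let Φ be the set of all atoms X=x for X ∈ U∪V. For every causal deontic model M_D=(S,F,P,A) whose priority ordering P has domain Φ, all exogenous settings u, u', and all intervention tuples Y⃗=y⃗ and Z⃗=z⃗ of distinct endogenous variables, the following are equivalent: (a) M_D satisfies the formula ⋀_{X=x∈Φ}(([Y⃗=y⃗]X=x)^u → ([Z⃗=z⃗]X=x)^{u'}) ∨ ⋁_{W=w∈Φ}( (([Z⃗=z⃗]W=w)^{u'} ∧ ¬([Y⃗=y⃗]W=w)^u) ∧ ⋀_{E=e∈Φ}((([Y⃗=y⃗]E=e)^u ∧ ¬([Z⃗=z⃗]E=e)^{u'}) → E=e ≺ W=w) ); (b) A₁ ≤_P A₂, where A₁ is the unique assignment complying with F_{Y⃗=y⃗} with exogenous values u, A₂ is the unique assignment complying with F_{Z⃗=z⃗} with exogenous values u', and ≤_P is the ideal-ordering condition induced by P applied to A₁ and A₂.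 -/
/-- A falsum, available whenever the signature has at least one variable. -/
noncomputable def botF (S : Signature) (h : Nonempty (S.U ⊕ S.V)) : Formula S :=
  Formula.and (.atom (@Classical.arbitrary _ h) (Classical.arbitrary _))
    (.neg (.atom (@Classical.arbitrary _ h) (Classical.arbitrary _)))

/-- A verum. -/
noncomputable def topF (S : Signature) (h : Nonempty (S.U ⊕ S.V)) : Formula S :=
  .neg (botF S h)

/-- Finite conjunction. -/
noncomputable def bigAnd (S : Signature) (h : Nonempty (S.U ⊕ S.V))
    (L : List (Formula S)) : Formula S :=
  L.foldr Formula.and (topF S h)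

/-- Finite disjunction. -/
noncomputable def bigOr (S : Signature) (h : Nonempty (S.U ⊕ S.V))
    (L : List (Formula S)) : Formula S :=
  L.foldr Formula.or (botF S h)

/-- The ideal ordering `≤_P` induced by a priority structure with domain `dom` and
priority relation `lt`: `A ≤_P A'` iff either every atom of the domain satisfied by
`A` is satisfied by `A'`, or there is an atom `Y=y` in the domain with `A(Y) ≠ y`,
`A'(Y) = y` such that every atom `Z=z` of the domain with `A(Z) = z` and
`A'(Z) ≠ z` has strictly lower priority than `Y=y`. -/
def IdealLe (S : Signature) (dom : Set (SAtom S)) (lt : SAtom S → SAtom S → Prop)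
    (A A' : Assignment S) : Prop :=
  (∀ a ∈ dom, A a.1 = a.2 → A' a.1 = a.2) ∨
  ∃ b ∈ dom, A b.1 ≠ b.2 ∧ A' b.1 = b.2 ∧
    ∀ c ∈ dom, A c.1 = c.2 → A' c.1 ≠ c.2 → lt c b

/-- The list of all atoms of the signature. -/
noncomputable def allAtoms (S : Signature) : List (SAtom S) :=
  (Finset.univ : Finset (SAtom S)).toList

/-- Formula (2), defining `[Y⃗=y⃗]U⃗=u ≤ [Z⃗=z⃗]U⃗=u'`. -/
noncomputable def formula2 (S : Signature) (h : Nonempty (S.U ⊕ S.V))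
    (u u' : ExoSetting S) (ly lz : Ivn S) : Formula S :=
  Formula.or
    (bigAnd S h ((allAtoms S).map fun a =>
      (Formula.ctx u (.intervene ly (.atom a.1 a.2))).imp
        (Formula.ctx u' (.intervene lz (.atom a.1 a.2)))))
    (bigOr S h ((allAtoms S).map fun w =>
      Formula.and
        (Formula.and (Formula.ctx u' (.intervene lz (.atom w.1 w.2)))
          (.neg (Formula.ctx u (.intervene ly (.atom w.1 w.2)))))
        (bigAnd S h ((allAtoms S).map fun e =>
          (Formula.and (Formula.ctx u (.intervene ly (.atom e.1 e.2)))
            (.neg (Formula.ctx u' (.intervene lz (.atom e.1 e.2))))).imp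
              (Formula.prec e.1 e.2 w.1 w.2)))))

section AuxProof

variable {S : Signature}

lemma sat_imp' {F : StructFns S} {P : Priority S} {A : Assignment S} {φ ψ : Formula S} :
    Sat S F P A (φ.imp ψ) ↔ (Sat S F P A φ → Sat S F P A ψ) := by
  simp [Formula.imp, Sat]

lemma sat_or' {F : StructFns S} {P : Priority S} {A : Assignment S} {φ ψ : Formula S} :
    Sat S F P A (φ.or ψ) ↔ (Sat S F P A φ ∨ Sat S F P A ψ) := by
  simp [Formula.or, Sat]; tauto

lemma sat_top' {F : StructFns S} {P : Priority S} {A : Assignment S}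
    (h : Nonempty (S.U ⊕ S.V)) : Sat S F P A (topF S h) := by
  simp [topF, botF, Sat]

lemma sat_bot' {F : StructFns S} {P : Priority S} {A : Assignment S}
    (h : Nonempty (S.U ⊕ S.V)) : ¬ Sat S F P A (botF S h) := by
  simp [botF, Sat]

lemma sat_bigAnd {F : StructFns S} {P : Priority S} {A : Assignment S}
    (h : Nonempty (S.U ⊕ S.V)) (L : List (Formula S)) :
    Sat S F P A (bigAnd S h L) ↔ ∀ φ ∈ L, Sat S F P A φ := by
  induction L with
  | nil => simpa [bigAnd] using sat_top' h
  | cons φ L ih =>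
    simp only [bigAnd, List.foldr_cons, List.mem_cons]
    rw [show Sat S F P A (Formula.and φ (List.foldr Formula.and (topF S h) L)) ↔
      Sat S F P A φ ∧ Sat S F P A (bigAnd S h L) from Iff.rfl, ih]
    aesop

lemma sat_bigOr {F : StructFns S} {P : Priority S} {A : Assignment S}
    (h : Nonempty (S.U ⊕ S.V)) (L : List (Formula S)) :
    Sat S F P A (bigOr S h L) ↔ ∃ φ ∈ L, Sat S F P A φ := by
  induction L with
  | nil => simpa [bigOr] using sat_bot' h
  | cons φ L ih =>
    simp only [bigOr, List.foldr_cons, List.mem_cons]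
    rw [show Sat S F P A (Formula.or φ (List.foldr Formula.or (botF S h) L)) ↔
      Sat S F P A φ ∨ Sat S F P A (bigOr S h L) from sat_or', ih]
    aesop

lemma compliesUnique {F : StructFns S} (hF : Recursive S F) {A A' : Assignment S}
    (hA : Complies S F A) (hA' : Complies S F A')
    (hexo : ∀ X, A (Sum.inl X) = A' (Sum.inl X)) : A = A' := by
  obtain ⟨lt, hsto, hdep⟩ := hF
  haveI : IsStrictTotalOrder _ lt := hsto
  have wf : WellFounded lt := Finite.wellFounded_of_trans_of_irrefl lt
  funext Y
  induction Y using wf.induction with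
  | _ Y ih =>
    cases Y with
    | inl X => exact hexo X
    | inr X =>
      rw [hA X, hA' X]
      exact hdep X _ _ (fun Z hne hZ => ih Z hZ)

lemma compliesExists {F : StructFns S} (hF : Recursive S F) (u : ExoSetting S) :
    ∃ A : Assignment S, Complies S F A ∧ ∀ X, A (Sum.inl X) = u X := by
  classical
  obtain ⟨lt, hsto, hdep⟩ := hF
  haveI : IsStrictTotalOrder _ lt := hsto
  have wf : WellFounded lt := Finite.wellFounded_of_trans_of_irrefl lt
  let body : ∀ Y : S.U ⊕ S.V, (∀ Z, lt Z Y → S.R Z) → S.R Y := fun Y =>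
    Sum.rec (motive := fun Y => (∀ Z, lt Z Y → S.R Z) → S.R Y)
      (fun X _ => u X)
      (fun X rec => F X (fun Z hne =>
        if hZ : lt Z (Sum.inr X) then rec Z hZ else Classical.arbitrary _)) Y
  let g : ∀ Y : S.U ⊕ S.V, S.R Y := wf.fix body
  have hfix : ∀ Y, g Y = body Y (fun Z _ => g Z) := fun Y => wf.fix_eq body Y
  refine ⟨g, fun X => ?_, fun X => hfix (Sum.inl X)⟩
  rw [hfix (Sum.inr X)]
  exact hdep X _ _ (fun Z hne hZ => by simp [Assignment.minus, hZ])

lemma solve_eq {F : StructFns S} (hF : Recursive S F) {A : Assignment S} {u : ExoSetting S}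
    (hA : Complies S F A) (hu : ∀ X, A (Sum.inl X) = u X) : solve S F u = A := by
  have hex : ∃ A', Complies S F A' ∧ ∀ X, A' (Sum.inl X) = u X := ⟨A, hA, hu⟩
  rw [solve, dif_pos hex]
  exact compliesUnique hF hex.choose_spec.1 hA
    (fun X => by rw [hex.choose_spec.2 X, hu X])

lemma recursive_applyIvn {F : StructFns S} (hF : Recursive S F) (l : Ivn S) :
    Recursive S (applyIvn S F l) := by
  obtain ⟨lt, hsto, hdep⟩ := hF
  refine ⟨lt, hsto, fun X B B' hag => ?_⟩
  by_cases hx : ∃ x : S.R (Sum.inr X), (⟨X, x⟩ : (Y : S.V) × S.R (Sum.inr Y)) ∈ l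
  · simp [applyIvn, hx]
  · simpa [applyIvn, hx] using hdep X B B' hag

lemma sat_ctx_intervene_atom (M : CDModel S) {u : ExoSetting S} {l : Ivn S}
    {A' : Assignment S} (hA' : Complies S (applyIvn S M.F l) A')
    (hu' : ∀ X, A' (Sum.inl X) = u X) (a : SAtom S) :
    M.Sat (.ctx u (.intervene l (.atom a.1 a.2))) ↔ A' a.1 = a.2 := by
  have hFl := recursive_applyIvn M.recF l
  obtain ⟨A0, hA0, hu0⟩ := compliesExists M.recF u
  have h1 : solve S M.F u = A0 := solve_eq M.recF hA0 hu0
  show Sat S (applyIvn S M.F l) M.P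
    (solve S (applyIvn S M.F l) (fun X => (solve S M.F u) (Sum.inl X)))
    (.atom a.1 a.2) ↔ _
  rw [h1]
  have h2 : (fun X => A0 (Sum.inl X)) = u := funext hu0
  rw [h2, solve_eq hFl hA' hu']
  rfl

end AuxProof

/-- definability of the ideal ordering between intervened states,
formula (2): for every causal deontic model whose priority ordering has as domain
the set of all atoms, all exogenous settings `u, u'`, and all intervention tuples
`Y⃗=y⃗` and `Z⃗=z⃗` of distinct endogenous variables, the model satisfies formula
(2) iff `A₁ ≤_P A₂`, where `A₁` is the unique assignment complying with
`F_{Y⃗=y⃗}` with exogenous values `u`, and `A₂` the unique assignment complying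
with `F_{Z⃗=z⃗}` with exogenous values `u'`. -/
theorem formula2_defines_intervened_ordering (S : Signature)
    (h : Nonempty (S.U ⊕ S.V)) (M : CDModel S) (hdom : M.P.dom = Set.univ)
    (u u' : ExoSetting S) (ly lz : Ivn S)
    (hly : Ivn.Distinct ly) (hlz : Ivn.Distinct lz)
    (A₁ A₂ : Assignment S)
    (hA₁ : Complies S (applyIvn S M.F ly) A₁) (hu₁ : ∀ X : S.U, A₁ (Sum.inl X) = u X)
    (hA₂ : Complies S (applyIvn S M.F lz) A₂) (hu₂ : ∀ X : S.U, A₂ (Sum.inl X) = u' X) :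
    M.Sat (formula2 S h u u' ly lz) ↔ IdealLe S M.P.dom M.P.lt A₁ A₂ := by
  have key₁ : ∀ a : SAtom S,
      Sat S M.F M.P M.A (.ctx u (.intervene ly (.atom a.1 a.2))) ↔ A₁ a.1 = a.2 :=
    fun a => sat_ctx_intervene_atom M hA₁ hu₁ a
  have key₂ : ∀ a : SAtom S,
      Sat S M.F M.P M.A (.ctx u' (.intervene lz (.atom a.1 a.2))) ↔ A₂ a.1 = a.2 :=
    fun a => sat_ctx_intervene_atom M hA₂ hu₂ a
  have hmem : ∀ a : SAtom S, a ∈ allAtoms S :=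
    fun a => by simp [allAtoms]
  rw [hdom]
  show Sat S M.F M.P M.A (formula2 S h u u' ly lz) ↔ _
  rw [formula2, sat_or', sat_bigAnd, sat_bigOr]
  constructor
  · rintro (hL | ⟨φ, hφ, hsat⟩)
    · left
      intro a _ ha
      have := hL _ (List.mem_map_of_mem (hmem a))
      rw [sat_imp', key₁, key₂] at this
      exact this ha
    · right
      obtain ⟨w, _, rfl⟩ := List.mem_map.1 hφ
      obtain ⟨⟨hw2, hw1⟩, hrest⟩ := hsat
      rw [key₂] at hw2
      rw [show Sat S M.F M.P M.A (Formula.neg (Formula.ctx u (.intervene ly (.atom w.1 w.2))))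
        ↔ ¬ Sat S M.F M.P M.A (Formula.ctx u (.intervene ly (.atom w.1 w.2))) from Iff.rfl,
        key₁] at hw1
      refine ⟨w, Set.mem_univ _, hw1, hw2, fun c _ hc1 hc2 => ?_⟩
      rw [sat_bigAnd] at hrest
      have := hrest _ (List.mem_map_of_mem (hmem c))
      rw [sat_imp'] at this
      exact this ⟨(key₁ c).2 hc1, fun hx => hc2 ((key₂ c).1 hx)⟩
  · rintro (hle | ⟨w, _, hw1, hw2, hrest⟩)
    · left
      intro φ hφ
      obtain ⟨a, _, rfl⟩ := List.mem_map.1 hφ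
      rw [sat_imp', key₁, key₂]
      exact hle a (Set.mem_univ _)
    · right
      refine ⟨_, List.mem_map_of_mem (hmem w), ⟨(key₂ w).2 hw2, fun hx => hw1 ((key₁ w).1 hx)⟩, ?_⟩
      rw [sat_bigAnd]
      intro φ hφ
      obtain ⟨e, _, rfl⟩ := List.mem_map.1 hφ
      rw [sat_imp']
      rintro ⟨he1, he2⟩
      exact hrest e (Set.mem_univ _) ((key₁ e).1 he1) (fun hx => he2 ((key₂ e).2 hx))
end
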